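/- arXiv:1808.01735 — 7 statements merged into one kernel-verified Lean document; each statement's English description precedes it below -/
import Mathlib

section
/- Suppose X and A are independent under B and all values of X have positive probability. Then the system has associative independence (the conditional distribution of the output given X = x1 equals that given X = x2, for all x1, x2) if and only if it has causal irrelevance (the interventional output distribution under setting the first input to x1 equals that under x2, for all x1, x2). -/
open Finset

/-- With independent coordinates and strictly positive marginal on
`𝒳`, associative independence holds iff causal irrelevance holds. -/
theorem associative_independence_iff_causal_irrelevance
    {𝒳 𝒜 𝒪 : Type} [Fintype 𝒳] [Fintype 𝒜] [Fintype 𝒪]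
    [Nonempty 𝒳] [Nonempty 𝒜] [Nonempty 𝒪] [DecidableEq 𝒪]
    (s : 𝒳 → 𝒜 → 𝒪)
    (BX : 𝒳 → ℝ) (BA : 𝒜 → ℝ)
    (hBX0 : ∀ x, 0 < BX x) (hBA0 : ∀ a, 0 ≤ BA a)
    (hBX1 : ∑ x : 𝒳, BX x = 1) (hBA1 : ∑ a : 𝒜, BA a = 1) :
    (∀ (x1 x2 : 𝒳) (o : 𝒪),
        (∑ a : 𝒜, if s x1 a = o then BX x1 * BA a else 0) / BX x1
          = (∑ a : 𝒜, if s x2 a = o then BX x2 * BA a else 0) / BX x2)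
      ↔ (∀ (x1 x2 : 𝒳) (o : 𝒪),
          (∑ a : 𝒜, if s x1 a = o then BA a else 0)
            = ∑ a : 𝒜, if s x2 a = o then BA a else 0) := by
  have key : ∀ (x : 𝒳) (o : 𝒪),
      (∑ a : 𝒜, if s x a = o then BX x * BA a else 0) / BX x
        = ∑ a : 𝒜, if s x a = o then BA a else 0 := by
    intro x o
    rw [div_eq_iff (hBX0 x).ne', Finset.sum_mul]
    refine Finset.sum_congr rfl fun a _ => ?_
    split <;> ring
  constructor
  · intro h x1 x2 o
    have := h x1 x2 o
    rwa [key, key] at this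
  · intro h x1 x2 o
    rw [key, key]
    exact h x1 x2 o
end

section
/- Let X and O be random variables on a finite probability space. If for all outputs o and all x1, x2 with P[X=x1] > 0 and P[X=x2] > 0 we have P[O=o | X=x1] ≤ e^ε · P[O=o | X=x2], then for all o with P[O=o] > 0 and all x: P[X=x | O=o] ≤ e^ε · P[X=x] and P[X=x] ≤ e^ε · P[X=x | O=o]. -/
open Finset

/-- ε-probabilistic associative independence of `O` on `X` implies
the statistical-nondisclosure form: the posterior of `X` given `O = o` is within
a factor `e^ε` of its prior. -/
theorem assoc_indep_implies_nondisclosure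
    {Ω 𝒳 𝒪 : Type} [Fintype Ω] [DecidableEq 𝒳] [DecidableEq 𝒪]
    (p : Ω → ℝ) (hp0 : ∀ ω, 0 ≤ p ω) (hp1 : ∑ ω : Ω, p ω = 1)
    (X : Ω → 𝒳) (O : Ω → 𝒪) (ε : ℝ) (hε : 0 ≤ ε)
    (h : ∀ (o : 𝒪) (x1 x2 : 𝒳),
        0 < (∑ ω ∈ univ.filter (fun ω => X ω = x1), p ω) →
        0 < (∑ ω ∈ univ.filter (fun ω => X ω = x2), p ω) →
        (∑ ω ∈ univ.filter (fun ω => O ω = o ∧ X ω = x1), p ω) /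
            (∑ ω ∈ univ.filter (fun ω => X ω = x1), p ω)
          ≤ Real.exp ε *
            ((∑ ω ∈ univ.filter (fun ω => O ω = o ∧ X ω = x2), p ω) /
              (∑ ω ∈ univ.filter (fun ω => X ω = x2), p ω))) :
    ∀ (o : 𝒪), 0 < (∑ ω ∈ univ.filter (fun ω => O ω = o), p ω) →
      ∀ (x : 𝒳),
        (∑ ω ∈ univ.filter (fun ω => X ω = x ∧ O ω = o), p ω) /
            (∑ ω ∈ univ.filter (fun ω => O ω = o), p ω)
          ≤ Real.exp ε * (∑ ω ∈ univ.filter (fun ω => X ω = x), p ω)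
        ∧ (∑ ω ∈ univ.filter (fun ω => X ω = x), p ω)
          ≤ Real.exp ε *
            ((∑ ω ∈ univ.filter (fun ω => X ω = x ∧ O ω = o), p ω) /
              (∑ ω ∈ univ.filter (fun ω => O ω = o), p ω)) := by
  intro o hpo x
  have hnn : ∀ (s : Finset Ω), 0 ≤ ∑ ω ∈ s, p ω :=
    fun s => Finset.sum_nonneg fun ω _ => hp0 ω
  have hexp : (0:ℝ) < Real.exp ε := Real.exp_pos ε
  -- swap the and order
  have hswap : (∑ ω ∈ univ.filter (fun ω => X ω = x ∧ O ω = o), p ω)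
      = ∑ ω ∈ univ.filter (fun ω => O ω = o ∧ X ω = x), p ω := by
    apply Finset.sum_congr _ (fun _ _ => rfl)
    ext ω; simp [and_comm]
  -- zero prob of x implies zero joint
  have hsub : ∀ x2 : 𝒳, (∑ ω ∈ univ.filter (fun ω => X ω = x2), p ω) = 0 →
      (∑ ω ∈ univ.filter (fun ω => O ω = o ∧ X ω = x2), p ω) = 0 := by
    intro x2 h0
    have hle : (∑ ω ∈ univ.filter (fun ω => O ω = o ∧ X ω = x2), p ω)
        ≤ ∑ ω ∈ univ.filter (fun ω => X ω = x2), p ω := by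
      apply Finset.sum_le_sum_of_subset_of_nonneg
      · intro ω hω; simp only [Finset.mem_filter] at *; exact ⟨hω.1, hω.2.2⟩
      · intro ω _ _; exact hp0 ω
    linarith [hnn (univ.filter (fun ω => O ω = o ∧ X ω = x2))]
  -- fiber decompositions
  have hmaps : ∀ s : Finset Ω, ∀ ω ∈ s, X ω ∈ Finset.univ.image X :=
    fun s ω _ => Finset.mem_image_of_mem X (Finset.mem_univ ω)
  have hdecomp : ∑ x2 ∈ Finset.univ.image X,
      (∑ ω ∈ univ.filter (fun ω => O ω = o ∧ X ω = x2), p ω)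
      = ∑ ω ∈ univ.filter (fun ω => O ω = o), p ω := by
    rw [← Finset.sum_fiberwise_of_maps_to (g := X) (hmaps _)]
    apply Finset.sum_congr rfl
    intro x2 _
    apply Finset.sum_congr _ (fun _ _ => rfl)
    ext ω; simp [Finset.mem_filter, and_comm]
  have hdecomp2 : ∑ x2 ∈ Finset.univ.image X,
      (∑ ω ∈ univ.filter (fun ω => X ω = x2), p ω) = 1 := by
    rw [← hp1, ← Finset.sum_fiberwise_of_maps_to (g := X) (hmaps Finset.univ)]
  rcases eq_or_lt_of_le (hnn (univ.filter (fun ω => X ω = x))) with hx | hx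
  · -- P(x) = 0
    have hj := hsub x hx.symm
    rw [hswap]
    constructor
    · rw [hj, ← hx]
      simp
    · rw [← hx, hj]
      simp
  · -- P(x) > 0
    rw [hswap]
    constructor
    · rw [div_le_iff₀ hpo]
      have key : ∀ x2 ∈ Finset.univ.image X,
          (∑ ω ∈ univ.filter (fun ω => O ω = o ∧ X ω = x), p ω) *
            (∑ ω ∈ univ.filter (fun ω => X ω = x2), p ω)
          ≤ Real.exp ε * (∑ ω ∈ univ.filter (fun ω => X ω = x), p ω) *
            (∑ ω ∈ univ.filter (fun ω => O ω = o ∧ X ω = x2), p ω) := by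
        intro x2 _
        rcases eq_or_lt_of_le (hnn (univ.filter (fun ω => X ω = x2))) with h2 | h2
        · rw [← h2, hsub x2 h2.symm]
          simp
        · have := h o x x2 hx h2
          rw [← mul_div_assoc, div_le_div_iff₀ hx h2] at this
          nlinarith
      have := Finset.sum_le_sum key
      rw [← Finset.mul_sum, ← Finset.mul_sum, hdecomp, hdecomp2, mul_one] at this
      linarith
    · rw [← mul_div_assoc, le_div_iff₀ hpo]
      have key : ∀ x2 ∈ Finset.univ.image X,
          (∑ ω ∈ univ.filter (fun ω => X ω = x), p ω) *
            (∑ ω ∈ univ.filter (fun ω => O ω = o ∧ X ω = x2), p ω)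
          ≤ Real.exp ε * (∑ ω ∈ univ.filter (fun ω => O ω = o ∧ X ω = x), p ω) *
            (∑ ω ∈ univ.filter (fun ω => X ω = x2), p ω) := by
        intro x2 _
        rcases eq_or_lt_of_le (hnn (univ.filter (fun ω => X ω = x2))) with h2 | h2
        · rw [← h2, hsub x2 h2.symm]
          simp
        · have := h o x2 x h2 hx
          rw [← mul_div_assoc, div_le_div_iff₀ h2 hx] at this
          nlinarith
      have := Finset.sum_le_sum key
      rw [← Finset.mul_sum, ← Finset.mul_sum, hdecomp, hdecomp2, mul_one] at this
      linarith
end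

section
/- Let X and O be random variables on a finite probability space. If for all o with P[O=o] > 0 and all x we have P[X=x | O=o] ≤ e^ε · P[X=x] and P[X=x] ≤ e^ε · P[X=x | O=o], then for all o, x1, x2 with P[X=x1] > 0 and P[X=x2] > 0: P[O=o | X=x1] ≤ e^{2ε} · P[O=o | X=x2]. -/
open Finset

/-- ε-bounded change of the posterior of `X` (statistical
nondisclosure form) implies 2ε-probabilistic associative independence. -/
theorem nondisclosure_implies_assoc_indep_two_eps
    {Ω 𝒳 𝒪 : Type} [Fintype Ω] [DecidableEq 𝒳] [DecidableEq 𝒪]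
    (p : Ω → ℝ) (hp0 : ∀ ω, 0 ≤ p ω) (hp1 : ∑ ω : Ω, p ω = 1)
    (X : Ω → 𝒳) (O : Ω → 𝒪) (ε : ℝ) (hε : 0 ≤ ε)
    (h : ∀ (o : 𝒪), 0 < (∑ ω ∈ univ.filter (fun ω => O ω = o), p ω) →
      ∀ (x : 𝒳),
        (∑ ω ∈ univ.filter (fun ω => X ω = x ∧ O ω = o), p ω) /
            (∑ ω ∈ univ.filter (fun ω => O ω = o), p ω)
          ≤ Real.exp ε * (∑ ω ∈ univ.filter (fun ω => X ω = x), p ω)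
        ∧ (∑ ω ∈ univ.filter (fun ω => X ω = x), p ω)
          ≤ Real.exp ε *
            ((∑ ω ∈ univ.filter (fun ω => X ω = x ∧ O ω = o), p ω) /
              (∑ ω ∈ univ.filter (fun ω => O ω = o), p ω))) :
    ∀ (o : 𝒪) (x1 x2 : 𝒳),
      0 < (∑ ω ∈ univ.filter (fun ω => X ω = x1), p ω) →
      0 < (∑ ω ∈ univ.filter (fun ω => X ω = x2), p ω) →
      (∑ ω ∈ univ.filter (fun ω => O ω = o ∧ X ω = x1), p ω) /
          (∑ ω ∈ univ.filter (fun ω => X ω = x1), p ω)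
        ≤ Real.exp (2 * ε) *
          ((∑ ω ∈ univ.filter (fun ω => O ω = o ∧ X ω = x2), p ω) /
            (∑ ω ∈ univ.filter (fun ω => X ω = x2), p ω)) := by
  intro o x1 x2 hx1 hx2
  set Po := ∑ ω ∈ univ.filter (fun ω => O ω = o), p ω with hPo
  have hswap : ∀ x : 𝒳, (∑ ω ∈ univ.filter (fun ω => O ω = o ∧ X ω = x), p ω)
      = ∑ ω ∈ univ.filter (fun ω => X ω = x ∧ O ω = o), p ω := by
    intro x
    apply Finset.sum_congr _ (fun _ _ => rfl)
    apply Finset.filter_congr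
    intro ω _
    simp [and_comm]
  have hPo0 : 0 ≤ Po := Finset.sum_nonneg fun ω _ => hp0 ω
  have hnum_nonneg : ∀ x : 𝒳, 0 ≤ ∑ ω ∈ univ.filter (fun ω => O ω = o ∧ X ω = x), p ω :=
    fun x => Finset.sum_nonneg fun ω _ => hp0 ω
  rcases lt_or_eq_of_le hPo0 with hpos | hzero
  · have h1 := (h o hpos x1).1
    have h2 := (h o hpos x2).2
    rw [hswap x1, hswap x2]
    -- P[X=x1 ∧ O=o] ≤ e^ε * P[X=x1] * Po
    have hA : (∑ ω ∈ univ.filter (fun ω => X ω = x1 ∧ O ω = o), p ω)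
        ≤ Real.exp ε * (∑ ω ∈ univ.filter (fun ω => X ω = x1), p ω) * Po := by
      have := (div_le_iff₀ hpos).mp h1
      linarith
    -- LHS ≤ e^ε * Po
    have hL : (∑ ω ∈ univ.filter (fun ω => X ω = x1 ∧ O ω = o), p ω) /
        (∑ ω ∈ univ.filter (fun ω => X ω = x1), p ω) ≤ Real.exp ε * Po := by
      rw [div_le_iff₀ hx1]
      calc (∑ ω ∈ univ.filter (fun ω => X ω = x1 ∧ O ω = o), p ω)
          ≤ Real.exp ε * (∑ ω ∈ univ.filter (fun ω => X ω = x1), p ω) * Po := hA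
        _ = Real.exp ε * Po * (∑ ω ∈ univ.filter (fun ω => X ω = x1), p ω) := by ring
    -- Po ≤ e^ε * P[X=x2∧O=o] / P[X=x2]
    have hB : Po ≤ Real.exp ε *
        ((∑ ω ∈ univ.filter (fun ω => X ω = x2 ∧ O ω = o), p ω) /
          (∑ ω ∈ univ.filter (fun ω => X ω = x2), p ω)) := by
      have h2' : Po * (∑ ω ∈ univ.filter (fun ω => X ω = x2), p ω)
          ≤ Real.exp ε * (∑ ω ∈ univ.filter (fun ω => X ω = x2 ∧ O ω = o), p ω) := by
        have := mul_le_mul_of_nonneg_left h2 hPo0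
        rw [mul_comm, ← mul_assoc] at this
        calc Po * (∑ ω ∈ univ.filter (fun ω => X ω = x2), p ω)
            = (∑ ω ∈ univ.filter (fun ω => X ω = x2), p ω) * Po := by ring
          _ ≤ Po * Real.exp ε *
              ((∑ ω ∈ univ.filter (fun ω => X ω = x2 ∧ O ω = o), p ω) / Po) := this
          _ = Real.exp ε * (Po * ((∑ ω ∈ univ.filter (fun ω => X ω = x2 ∧ O ω = o), p ω) / Po)) := by ring
          _ = Real.exp ε * (∑ ω ∈ univ.filter (fun ω => X ω = x2 ∧ O ω = o), p ω) := by
              rw [mul_div_cancel₀ _ (ne_of_gt hpos)]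
      rw [mul_div_assoc'] at *
      rw [le_div_iff₀ hx2]
      linarith
    calc (∑ ω ∈ univ.filter (fun ω => X ω = x1 ∧ O ω = o), p ω) /
          (∑ ω ∈ univ.filter (fun ω => X ω = x1), p ω)
        ≤ Real.exp ε * Po := hL
      _ ≤ Real.exp ε * (Real.exp ε *
          ((∑ ω ∈ univ.filter (fun ω => X ω = x2 ∧ O ω = o), p ω) /
            (∑ ω ∈ univ.filter (fun ω => X ω = x2), p ω))) := by
          exact mul_le_mul_of_nonneg_left hB (le_of_lt (Real.exp_pos ε))
      _ = Real.exp (2 * ε) *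
          ((∑ ω ∈ univ.filter (fun ω => X ω = x2 ∧ O ω = o), p ω) /
            (∑ ω ∈ univ.filter (fun ω => X ω = x2), p ω)) := by
          rw [← mul_assoc, ← Real.exp_add]; ring_nf
  · -- Po = 0, so numerator of LHS is 0
    have hsub : univ.filter (fun ω => O ω = o ∧ X ω = x1) ⊆ univ.filter (fun ω => O ω = o) := by
      intro ω hω
      simp only [mem_filter] at *
      exact ⟨hω.1, hω.2.1⟩
    have hle : (∑ ω ∈ univ.filter (fun ω => O ω = o ∧ X ω = x1), p ω) ≤ Po :=
      Finset.sum_le_sum_of_subset_of_nonneg hsub (fun ω _ _ => hp0 ω)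
    have hz : (∑ ω ∈ univ.filter (fun ω => O ω = o ∧ X ω = x1), p ω) = 0 :=
      le_antisymm (by rw [← hzero] at hle; exact hle) (hnum_nonneg x1)
    rw [hz, zero_div]
    exact mul_nonneg (le_of_lt (Real.exp_pos _)) (div_nonneg (hnum_nonneg x2) (le_of_lt hx2))
end

section
/- Let O be a random variable and φ an event on a finite probability space. Suppose 0 < P[φ] < 1, O is informative (∀ o, P[O = o] < 1), and O cannot trivially close φ (for every o with P[O=o] > 0, 0 < P[φ | O=o] < 1). Then for every output o, the event B := (O ≠ o) ∪ φ has positive probability, 0 < P[φ | B] < 1, and P[φ | B ∩ (O = o)] = 1 (provided P[B ∩ (O=o)] > 0). -/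
open Finset

/-- If `0 < P[φ] < 1`, `O` is informative, and `O` cannot
trivially close `φ`, then for every output `o`, the background condition
`B = (O ≠ o) ∪ φ` has positive probability, `φ` is open for `B`, and `φ` is
resolved (probability 1) given `B ∩ (O = o)` whenever that event has positive
probability. -/
theorem dwork_naor_core
    {Ω 𝒪 : Type} [Fintype Ω] [Fintype 𝒪] [DecidableEq Ω] [DecidableEq 𝒪]
    (p : Ω → ℝ) (hp0 : ∀ ω, 0 ≤ p ω) (hp1 : ∑ ω : Ω, p ω = 1)
    (O : Ω → 𝒪) (φ : Finset Ω)
    (hφ : 0 < (∑ ω ∈ φ, p ω) ∧ (∑ ω ∈ φ, p ω) < 1)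
    (hinf : ∀ o : 𝒪, (∑ ω ∈ univ.filter (fun ω => O ω = o), p ω) < 1)
    (hnotriv : ∀ o : 𝒪, 0 < (∑ ω ∈ univ.filter (fun ω => O ω = o), p ω) →
        0 < (∑ ω ∈ φ ∩ univ.filter (fun ω => O ω = o), p ω) /
              (∑ ω ∈ univ.filter (fun ω => O ω = o), p ω)
        ∧ (∑ ω ∈ φ ∩ univ.filter (fun ω => O ω = o), p ω) /
              (∑ ω ∈ univ.filter (fun ω => O ω = o), p ω) < 1) :
    ∀ o : 𝒪,
      0 < (∑ ω ∈ univ.filter (fun ω => O ω ≠ o) ∪ φ, p ω)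
      ∧ (0 < (∑ ω ∈ φ ∩ (univ.filter (fun ω => O ω ≠ o) ∪ φ), p ω) /
              (∑ ω ∈ univ.filter (fun ω => O ω ≠ o) ∪ φ, p ω)
          ∧ (∑ ω ∈ φ ∩ (univ.filter (fun ω => O ω ≠ o) ∪ φ), p ω) /
              (∑ ω ∈ univ.filter (fun ω => O ω ≠ o) ∪ φ, p ω) < 1)
      ∧ (0 < (∑ ω ∈ (univ.filter (fun ω => O ω ≠ o) ∪ φ) ∩
                  univ.filter (fun ω => O ω = o), p ω) →
          (∑ ω ∈ φ ∩ ((univ.filter (fun ω => O ω ≠ o) ∪ φ) ∩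
                  univ.filter (fun ω => O ω = o)), p ω) /
            (∑ ω ∈ (univ.filter (fun ω => O ω ≠ o) ∪ φ) ∩
                  univ.filter (fun ω => O ω = o), p ω) = 1) := by
  intro o
  set A : Finset Ω := univ.filter (fun ω => O ω = o) with hA
  set B : Finset Ω := univ.filter (fun ω => O ω ≠ o) ∪ φ with hB
  have hφB : φ ⊆ B := subset_union_right
  have hφBint : φ ∩ B = φ := inter_eq_left.mpr hφB
  have hPB : 0 < ∑ ω ∈ B, p ω :=
    lt_of_lt_of_le hφ.1 (sum_le_sum_of_subset_of_nonneg hφB (fun ω _ _ => hp0 ω))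
  -- key: positive mass on B \ φ
  have hsd : 0 < ∑ ω ∈ B \ φ, p ω := by
    by_contra hcon
    have hz : ∑ ω ∈ B \ φ, p ω = 0 :=
      le_antisymm (le_of_not_gt hcon) (sum_nonneg (fun ω _ => hp0 ω))
    have hall : ∀ ω ∈ B \ φ, p ω = 0 :=
      (sum_eq_zero_iff_of_nonneg (fun ω _ => hp0 ω)).mp hz
    -- find ω₀ with p ω₀ > 0 and O ω₀ ≠ o
    have hcompl : 0 < ∑ ω ∈ univ \ A, p ω := by
      have h := sum_sdiff (subset_univ A) (f := p)
      have := hinf o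
      nlinarith [h, hp1]
    obtain ⟨ω₀, hω₀mem, hω₀⟩ : ∃ ω ∈ univ \ A, 0 < p ω := by
      by_contra hc
      push_neg at hc
      have : ∑ ω ∈ univ \ A, p ω = 0 :=
        sum_eq_zero (fun ω hω => le_antisymm (hc ω hω) (hp0 ω))
      linarith
    have hω₀ne : O ω₀ ≠ o := by
      simp only [hA, mem_sdiff, mem_filter, mem_univ, true_and] at hω₀mem
      exact hω₀mem
    set o' := O ω₀ with ho'
    set A' : Finset Ω := univ.filter (fun ω => O ω = o') with hA'
    have hPA' : 0 < ∑ ω ∈ A', p ω := by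
      have hmem : ω₀ ∈ A' := by simp [hA', ho']
      exact lt_of_lt_of_le hω₀ (single_le_sum (fun ω _ => hp0 ω) hmem)
    have hlt : (∑ ω ∈ φ ∩ A', p ω) < ∑ ω ∈ A', p ω :=
      (div_lt_one hPA').mp (hnotriv o' hPA').2
    have hsub : φ ∩ A' ⊆ A' := inter_subset_right
    have hsplit := sum_sdiff hsub (f := p)
    have hpos' : 0 < ∑ ω ∈ A' \ (φ ∩ A'), p ω := by linarith
    obtain ⟨ω₁, hω₁mem, hω₁⟩ : ∃ ω ∈ A' \ (φ ∩ A'), 0 < p ω := by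
      by_contra hc
      push_neg at hc
      have : ∑ ω ∈ A' \ (φ ∩ A'), p ω = 0 :=
        sum_eq_zero (fun ω hω => le_antisymm (hc ω hω) (hp0 ω))
      linarith
    have hω₁A' : ω₁ ∈ A' := (mem_sdiff.mp hω₁mem).1
    have hω₁nφ : ω₁ ∉ φ := fun h =>
      (mem_sdiff.mp hω₁mem).2 (mem_inter.mpr ⟨h, hω₁A'⟩)
    have hω₁o' : O ω₁ = o' := by
      simp only [hA', mem_filter, mem_univ, true_and] at hω₁A'
      exact hω₁A'
    have hω₁B : ω₁ ∈ B \ φ := by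
      refine mem_sdiff.mpr ⟨mem_union_left _ ?_, hω₁nφ⟩
      simp [hω₁o', hω₀ne]
    exact absurd (hall ω₁ hω₁B) (ne_of_gt hω₁)
  have hφltB : (∑ ω ∈ φ, p ω) < ∑ ω ∈ B, p ω := by
    have := sum_sdiff hφB (f := p)
    linarith
  refine ⟨hPB, ⟨?_, ?_⟩, ?_⟩
  · rw [hφBint]; exact div_pos hφ.1 hPB
  · rw [hφBint]; exact (div_lt_one hPB).mpr hφltB
  · intro hpos
    have heq : φ ∩ (B ∩ A) = B ∩ A := by
      ext ω
      simp only [hB, hA, mem_inter, mem_union, mem_filter, mem_univ, true_and]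
      tauto
    rw [heq]
    exact div_self (ne_of_gt hpos)
end

section
/- For any random variable O (finite range) and event φ on a finite probability space, at least one of the following holds: (1) P[φ] ∈ {0, 1}; (2) there exists o with P[O = o] = 1; (3) there exists o with P[O=o] > 0 and P[φ | O=o] ∈ {0,1}; or (4) for all o, the event (O ≠ o) ∪ φ has positive probability with 0 < P[φ | (O≠o) ∪ φ] < 1, while P[φ | ((O≠o) ∪ φ) ∩ (O=o)] = 1 whenever that conditioning event has positive probability. -/
open Finset

/-- Generic impossibility theorem: for any `O` and event `φ`, one
of the following holds: (1) `P[φ] ∈ {0,1}`; (2) some output has probability 1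
(uninformative); (3) some positive-probability output closes `φ`; or (4) for
every output `o`, the background condition `(O ≠ o) ∪ φ` has positive
probability, leaves `φ` open, and observing `O = o` on top of it resolves `φ`. -/
theorem generic_impossibility
    {Ω 𝒪 : Type} [Fintype Ω] [Fintype 𝒪] [DecidableEq Ω] [DecidableEq 𝒪]
    (p : Ω → ℝ) (hp0 : ∀ ω, 0 ≤ p ω) (hp1 : ∑ ω : Ω, p ω = 1)
    (O : Ω → 𝒪) (φ : Finset Ω) :
    ((∑ ω ∈ φ, p ω) = 0 ∨ (∑ ω ∈ φ, p ω) = 1)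
    ∨ (∃ o : 𝒪, (∑ ω ∈ univ.filter (fun ω => O ω = o), p ω) = 1)
    ∨ (∃ o : 𝒪, 0 < (∑ ω ∈ univ.filter (fun ω => O ω = o), p ω)
        ∧ ((∑ ω ∈ φ ∩ univ.filter (fun ω => O ω = o), p ω) /
              (∑ ω ∈ univ.filter (fun ω => O ω = o), p ω) = 0
          ∨ (∑ ω ∈ φ ∩ univ.filter (fun ω => O ω = o), p ω) /
              (∑ ω ∈ univ.filter (fun ω => O ω = o), p ω) = 1))
    ∨ (∀ o : 𝒪,
        0 < (∑ ω ∈ univ.filter (fun ω => O ω ≠ o) ∪ φ, p ω)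
        ∧ 0 < (∑ ω ∈ φ ∩ (univ.filter (fun ω => O ω ≠ o) ∪ φ), p ω) /
                (∑ ω ∈ univ.filter (fun ω => O ω ≠ o) ∪ φ, p ω)
        ∧ (∑ ω ∈ φ ∩ (univ.filter (fun ω => O ω ≠ o) ∪ φ), p ω) /
                (∑ ω ∈ univ.filter (fun ω => O ω ≠ o) ∪ φ, p ω) < 1
        ∧ (0 < (∑ ω ∈ (univ.filter (fun ω => O ω ≠ o) ∪ φ) ∩
                    univ.filter (fun ω => O ω = o), p ω) →
            (∑ ω ∈ φ ∩ ((univ.filter (fun ω => O ω ≠ o) ∪ φ) ∩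
                    univ.filter (fun ω => O ω = o)), p ω) /
              (∑ ω ∈ (univ.filter (fun ω => O ω ≠ o) ∪ φ) ∩
                    univ.filter (fun ω => O ω = o), p ω) = 1)) := by
  classical
  have hnn : ∀ s : Finset Ω, 0 ≤ ∑ ω ∈ s, p ω :=
    fun s => Finset.sum_nonneg fun ω _ => hp0 ω
  have hmono : ∀ s t : Finset Ω, s ⊆ t → (∑ ω ∈ s, p ω) ≤ ∑ ω ∈ t, p ω :=
    fun s t h => Finset.sum_le_sum_of_subset_of_nonneg h fun ω _ _ => hp0 ω
  by_cases h1 : (∑ ω ∈ φ, p ω) = 0 ∨ (∑ ω ∈ φ, p ω) = 1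
  · exact Or.inl h1
  push_neg at h1
  obtain ⟨h10, h11⟩ := h1
  have hφpos : 0 < ∑ ω ∈ φ, p ω := lt_of_le_of_ne (hnn φ) (Ne.symm h10)
  by_cases h2 : ∃ o : 𝒪, (∑ ω ∈ univ.filter (fun ω => O ω = o), p ω) = 1
  · exact Or.inr (Or.inl h2)
  push_neg at h2
  by_cases h3 : ∃ o : 𝒪, 0 < (∑ ω ∈ univ.filter (fun ω => O ω = o), p ω)
        ∧ ((∑ ω ∈ φ ∩ univ.filter (fun ω => O ω = o), p ω) /
              (∑ ω ∈ univ.filter (fun ω => O ω = o), p ω) = 0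
          ∨ (∑ ω ∈ φ ∩ univ.filter (fun ω => O ω = o), p ω) /
              (∑ ω ∈ univ.filter (fun ω => O ω = o), p ω) = 1)
  · exact Or.inr (Or.inr (Or.inl h3))
  push_neg at h3
  refine Or.inr (Or.inr (Or.inr ?_))
  -- key claim: for every output o, the part of (O ≠ o) outside φ has positive mass
  have hkey : ∀ o : 𝒪, 0 < ∑ ω ∈ (univ.filter fun ω => O ω ≠ o) \ φ, p ω := by
    intro o
    by_contra hcon
    have h0 : (∑ ω ∈ (univ.filter fun ω => O ω ≠ o) \ φ, p ω) = 0 :=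
      le_antisymm (not_lt.1 hcon) (hnn _)
    have hzero : ∀ ω ∈ (univ.filter fun ω => O ω ≠ o) \ φ, p ω = 0 :=
      (Finset.sum_eq_zero_iff_of_nonneg fun ω _ => hp0 ω).1 h0
    -- find another output o' with positive probability
    have hBle : (∑ ω ∈ univ.filter (fun ω => O ω = o), p ω) ≤ 1 := by
      rw [← hp1]; exact hmono _ _ (Finset.subset_univ _)
    have hBlt : (∑ ω ∈ univ.filter (fun ω => O ω = o), p ω) < 1 :=
      lt_of_le_of_ne hBle (h2 o)
    have hsplit : (∑ ω ∈ univ.filter (fun ω => O ω = o), p ω)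
        + (∑ ω ∈ univ.filter (fun ω => ¬ O ω = o), p ω) = 1 := by
      rw [← hp1]; exact Finset.sum_filter_add_sum_filter_not _ _ _
    have hApos : 0 < ∑ ω ∈ univ.filter (fun ω => O ω ≠ o), p ω := by
      have : (∑ ω ∈ univ.filter (fun ω => ¬ O ω = o), p ω) = 1
          - (∑ ω ∈ univ.filter (fun ω => O ω = o), p ω) := by linarith
      simpa [Ne, this] using sub_pos.2 hBlt
    obtain ⟨ω₀, hω₀mem, hω₀ne⟩ :
        ∃ ω ∈ univ.filter (fun ω => O ω ≠ o), p ω ≠ 0 := by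
      by_contra hall
      push_neg at hall
      exact absurd (Finset.sum_eq_zero hall) (ne_of_gt hApos)
    have hω₀A : O ω₀ ≠ o := (Finset.mem_filter.1 hω₀mem).2
    have hω₀pos : 0 < p ω₀ := lt_of_le_of_ne (hp0 ω₀) (Ne.symm hω₀ne)
    set o' := O ω₀ with ho'
    have hB'pos : 0 < ∑ ω ∈ univ.filter (fun ω => O ω = o'), p ω :=
      lt_of_lt_of_le hω₀pos
        (Finset.single_le_sum (fun ω _ => hp0 ω)
          (Finset.mem_filter.2 ⟨Finset.mem_univ _, rfl⟩))
    -- every ω with O ω = o' outside φ has zero mass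
    have hdiff0 : (∑ ω ∈ (univ.filter fun ω => O ω = o') \ φ, p ω) = 0 := by
      apply Finset.sum_eq_zero
      intro ω hω
      apply hzero
      rw [Finset.mem_sdiff] at hω ⊢
      refine ⟨Finset.mem_filter.2 ⟨Finset.mem_univ _, ?_⟩, hω.2⟩
      rw [(Finset.mem_filter.1 hω.1).2]
      exact hω₀A
    have hBeq : (∑ ω ∈ φ ∩ univ.filter (fun ω => O ω = o'), p ω)
        = ∑ ω ∈ univ.filter (fun ω => O ω = o'), p ω := by
      have := Finset.sum_inter_add_sum_sdiff (univ.filter fun ω => O ω = o') φ p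
      rw [hdiff0, add_zero] at this
      rw [Finset.inter_comm]; exact this
    have := (h3 o' hB'pos).2
    rw [hBeq, div_self (ne_of_gt hB'pos)] at this
    exact this rfl
  intro o
  set A := univ.filter (fun ω => O ω ≠ o) with hA
  set B := univ.filter (fun ω => O ω = o) with hB
  have hφS : φ ∩ (A ∪ φ) = φ := Finset.inter_eq_left.2 Finset.subset_union_right
  have hSsum : (∑ ω ∈ A ∪ φ, p ω) = (∑ ω ∈ φ, p ω) + ∑ ω ∈ A \ φ, p ω := by
    have h1 : A ∪ φ = φ ∪ A \ φ := by
      rw [Finset.union_sdiff_self_eq_union, Finset.union_comm]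
    rw [h1, Finset.sum_union Finset.sdiff_disjoint.symm]
  have hSpos : 0 < ∑ ω ∈ A ∪ φ, p ω := by
    rw [hSsum]
    have := hkey o
    linarith
  have hlt : (∑ ω ∈ φ, p ω) < ∑ ω ∈ A ∪ φ, p ω := by
    rw [hSsum]; linarith [hkey o]
  refine ⟨hSpos, ?_, ?_, ?_⟩
  · rw [hφS]; exact div_pos hφpos hSpos
  · rw [hφS]; exact (div_lt_one hSpos).2 hlt
  · intro hpos
    have hSB : (A ∪ φ) ∩ B = φ ∩ B := by
      ext ω
      simp only [hA, hB, Finset.mem_inter, Finset.mem_union, Finset.mem_filter,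
        Finset.mem_univ, true_and]
      tauto
    have hφSB : φ ∩ ((A ∪ φ) ∩ B) = φ ∩ B := by
      rw [hSB, ← Finset.inter_assoc, Finset.inter_self]
    rw [hSB] at hpos
    rw [hφSB, hSB]
    exact div_self (ne_of_gt hpos)
end

section
/- If a randomized database mechanism s satisfies ε-differential privacy (changing any single row changes output probabilities by at most a factor e^ε), and under an adversary's prior the database rows D_1, ..., D_k are mutually independent and the mechanism's randomness R is independent of the rows, then for every row index i, row values d and d' of positive prior probability, and output o: P[s(D, R) = o | D_i = d] ≤ e^ε · P[s(D, R) = o | D_i = d']. -/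
open Finset

/-- ε-differential privacy plus a row-independent adversary prior
(and fresh mechanism randomness) implies ε-associative-inferential privacy:
conditioning on two values of a single row changes the posterior output
probability by at most a factor `e^ε`. -/
theorem dp_implies_assoc_inferential_privacy
    {𝒟 ℛ 𝒪 : Type} [Fintype 𝒟] [Fintype ℛ] [Fintype 𝒪]
    [DecidableEq 𝒟] [DecidableEq 𝒪] {k : ℕ}
    (s : (Fin k → 𝒟) → ℛ → 𝒪) (ε : ℝ) (hε : 0 ≤ ε)
    (BR : ℛ → ℝ) (hBR0 : ∀ r, 0 ≤ BR r) (hBR1 : ∑ r : ℛ, BR r = 1)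
    (Bi : Fin k → 𝒟 → ℝ)
    (hBi0 : ∀ i d, 0 ≤ Bi i d) (hBi1 : ∀ i, ∑ d : 𝒟, Bi i d = 1)
    (hDP : ∀ (i : Fin k) (d : Fin k → 𝒟) (x x' : 𝒟) (o : 𝒪),
        (∑ r : ℛ, if s (Function.update d i x) r = o then BR r else 0)
          ≤ Real.exp ε *
            ∑ r : ℛ, if s (Function.update d i x') r = o then BR r else 0) :
    ∀ (i : Fin k) (d d' : 𝒟) (o : 𝒪),
      0 < Bi i d → 0 < Bi i d' →
      (∑ db : Fin k → 𝒟, ∑ r : ℛ,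
          if db i = d ∧ s db r = o then (∏ j : Fin k, Bi j (db j)) * BR r else 0)
          / Bi i d
        ≤ Real.exp ε *
          ((∑ db : Fin k → 𝒟, ∑ r : ℛ,
              if db i = d' ∧ s db r = o then (∏ j : Fin k, Bi j (db j)) * BR r else 0)
            / Bi i d') := by
  intro i d d' o hd hd'
  set Q : (Fin k → 𝒟) → ℝ := fun db => ∑ r : ℛ, if s db r = o then BR r else 0 with hQdef
  set F : (Fin k → 𝒟) → ℝ := fun db => (∏ j ∈ univ.erase i, Bi j (db j)) * Q db with hFdef
  have hQ0 : ∀ db, 0 ≤ Q db := by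
    intro db
    exact Finset.sum_nonneg fun r _ => by split <;> simp [hBR0 r]
  -- Step 1: collapse the double sum
  have key : ∀ (x : 𝒟), (∑ db : Fin k → 𝒟, ∑ r : ℛ,
      if db i = x ∧ s db r = o then (∏ j : Fin k, Bi j (db j)) * BR r else 0)
      = Bi i x * ∑ db ∈ univ.filter (fun db => db i = x), F db := by
    intro x
    rw [Finset.mul_sum, Finset.sum_filter]
    apply Finset.sum_congr rfl
    intro db _
    by_cases h : db i = x
    · simp only [h, true_and, if_true]
      have hprod : (∏ j : Fin k, Bi j (db j))
          = Bi i x * ∏ j ∈ univ.erase i, Bi j (db j) := by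
        rw [← h, Finset.mul_prod_erase univ (fun j => Bi j (db j)) (mem_univ i)]
      rw [hFdef]
      simp only [hQdef]
      rw [Finset.mul_sum, Finset.mul_sum]
      apply Finset.sum_congr rfl
      intro r _
      split
      · rw [hprod]; ring
      · simp
    · simp [h]
  have hFupd : ∀ db : Fin k → 𝒟, db i = d' →
      F (Function.update db i d) ≤ Real.exp ε * F db := by
    intro db hdb
    have hself : Function.update db i d' = db := by
      rw [← hdb]; exact Function.update_eq_self i db
    have hQle : Q (Function.update db i d) ≤ Real.exp ε * Q db := by
      have := hDP i db d d' o
      rwa [hself] at this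
    have hprod : (∏ j ∈ univ.erase i, Bi j (Function.update db i d j))
        = ∏ j ∈ univ.erase i, Bi j (db j) := by
      apply Finset.prod_congr rfl
      intro j hj
      rw [Function.update_of_ne (Finset.ne_of_mem_erase hj)]
    have hP0 : 0 ≤ ∏ j ∈ univ.erase i, Bi j (db j) :=
      Finset.prod_nonneg fun j _ => hBi0 j (db j)
    calc F (Function.update db i d)
        = (∏ j ∈ univ.erase i, Bi j (db j)) * Q (Function.update db i d) := by
          rw [hFdef]; simp only [hprod]
      _ ≤ (∏ j ∈ univ.erase i, Bi j (db j)) * (Real.exp ε * Q db) :=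
          mul_le_mul_of_nonneg_left hQle hP0
      _ = Real.exp ε * F db := by rw [hFdef]; ring
  -- Step 2: reindex the d-sum over the d'-sum
  have e1 : ∑ db ∈ univ.filter (fun db => db i = d), F db
      = ∑ db ∈ univ.filter (fun db => db i = d'), F (Function.update db i d) := by
    apply Finset.sum_bij' (fun db _ => Function.update db i d')
      (fun db _ => Function.update db i d)
    case hi => intro a ha; simp [Function.update_self]
    case hj => intro a ha; simp [Function.update_self]
    case left_neg =>
      intro a ha
      simp only [mem_filter, mem_univ, true_and] at ha
      rw [Function.update_idem, ← ha, Function.update_eq_self]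
    case right_neg =>
      intro a ha
      simp only [mem_filter, mem_univ, true_and] at ha
      rw [Function.update_idem, ← ha, Function.update_eq_self]
    case h =>
      intro a ha
      simp only [mem_filter, mem_univ, true_and] at ha
      rw [Function.update_idem, ← ha, Function.update_eq_self]
  have hsum : ∑ db ∈ univ.filter (fun db => db i = d), F db
      ≤ Real.exp ε * ∑ db ∈ univ.filter (fun db => db i = d'), F db := by
    rw [e1, Finset.mul_sum]
    apply Finset.sum_le_sum
    intro db hdb
    simp only [mem_filter, mem_univ, true_and] at hdb
    exact hFupd db hdb
  rw [key d, key d', mul_div_cancel_left₀ _ (ne_of_gt hd),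
    mul_div_cancel_left₀ _ (ne_of_gt hd')]
  exact hsum
end

section
/- Let s : 𝒳 → 𝒜 → 𝒪 and let B be a joint pmf on 𝒳 × 𝒜 with independent coordinates, strictly positive on 𝒳. If the output O = s(X, A) is statistically independent of X under B (associative independence), then for every x1, x2 in 𝒳 and output o, the interventional distributions agree: P[s(x1, A) = o] = P[s(x2, A) = o]; conversely, causal irrelevance implies associative independence under the same hypotheses. -/
open Finset

/-- With independent coordinates (`B (x,a) = BX x * BA a`,
`BX` strictly positive), the output `O = s(X,A)` is statistically independent
of `X` iff the interventional distributions `P[s(x, A) = o]` agree for all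
values of the first input (causal irrelevance). -/
theorem statistical_independence_iff_interventional_agreement
    {𝒳 𝒜 𝒪 : Type} [Fintype 𝒳] [Fintype 𝒜] [Fintype 𝒪]
    [DecidableEq 𝒳] [DecidableEq 𝒪]
    (s : 𝒳 → 𝒜 → 𝒪)
    (BX : 𝒳 → ℝ) (BA : 𝒜 → ℝ)
    (hBX0 : ∀ x, 0 < BX x) (hBA0 : ∀ a, 0 ≤ BA a)
    (hBX1 : ∑ x : 𝒳, BX x = 1) (hBA1 : ∑ a : 𝒜, BA a = 1) :
    (∀ (x : 𝒳) (o : 𝒪),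
        (∑ p : 𝒳 × 𝒜, if s p.1 p.2 = o ∧ p.1 = x then BX p.1 * BA p.2 else 0)
          = (∑ p : 𝒳 × 𝒜, if s p.1 p.2 = o then BX p.1 * BA p.2 else 0) * BX x)
      ↔ (∀ (x1 x2 : 𝒳) (o : 𝒪),
          (∑ a : 𝒜, if s x1 a = o then BA a else 0)
            = ∑ a : 𝒜, if s x2 a = o then BA a else 0) := by
  set f : 𝒳 → 𝒪 → ℝ := fun x o => ∑ a, if s x a = o then BA a else 0 with hf
  have key1 : ∀ (x : 𝒳) (o : 𝒪),
      (∑ p : 𝒳 × 𝒜, if s p.1 p.2 = o ∧ p.1 = x then BX p.1 * BA p.2 else 0)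
        = BX x * f x o := by
    intro x o
    rw [Fintype.sum_prod_type]
    rw [Finset.sum_eq_single x]
    · simp [hf, Finset.mul_sum, mul_ite]
    · intro b _ hb
      simp [hb]
    · simp
  have key2 : ∀ (o : 𝒪),
      (∑ p : 𝒳 × 𝒜, if s p.1 p.2 = o then BX p.1 * BA p.2 else 0)
        = ∑ x, BX x * f x o := by
    intro o
    rw [Fintype.sum_prod_type]
    congr 1
    ext x
    simp [hf, Finset.mul_sum, mul_ite]
  have equiv : ∀ (x : 𝒳) (o : 𝒪),
      ((∑ p : 𝒳 × 𝒜, if s p.1 p.2 = o ∧ p.1 = x then BX p.1 * BA p.2 else 0)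
          = (∑ p : 𝒳 × 𝒜, if s p.1 p.2 = o then BX p.1 * BA p.2 else 0) * BX x)
        ↔ f x o = ∑ x', BX x' * f x' o := by
    intro x o
    rw [key1, key2, mul_comm (∑ x', BX x' * f x' o) (BX x)]
    constructor
    · intro h; exact mul_left_cancel₀ (ne_of_gt (hBX0 x)) h
    · intro h; rw [h]
  constructor
  · intro h x1 x2 o
    have h1 := (equiv x1 o).mp (h x1 o)
    have h2 := (equiv x2 o).mp (h x2 o)
    show f x1 o = f x2 o
    rw [h1, h2]
  · intro h x o
    rw [equiv x o]
    have hc : ∀ x', f x' o = f x o := fun x' => h x' x o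
    calc f x o = (∑ x', BX x') * f x o := by rw [hBX1, one_mul]
    _ = ∑ x', BX x' * f x o := by rw [Finset.sum_mul]
    _ = ∑ x', BX x' * f x' o := by
        exact Finset.sum_congr rfl (fun x' _ => by rw [hc x'])
end
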